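/- Let a, b, p, q ∈ ℂⁿ and define the functions P, Q, R, S on Sp(n) by P = Σ_{j,α} p_j·a_α·z_{jα}, Q = Σ_{k,β} q_k·b_β·z_{kβ}, R = Σ_{j,β} p_j·b_β·z_{jβ}, S = Σ_{k,α} q_k·a_α·z_{kα} (where z_{jα} = q'_{j,α} for q' ∈ Sp(n)). Then the following identities of functions on Sp(n) hold: κ(P,P) = −(1/2)·P², κ(Q,Q) = −(1/2)·Q², κ(R,R) = −(1/2)·R², κ(S,S) = −(1/2)·S², κ(P,Q) = −(1/2)·R·S, κ(R,S) = −(1/2)·P·Q, κ(P,R) = −(1/2)·P·R, κ(P,S) = −(1/2)·P·S, κ(Q,R) = −(1/2)·Q·R, κ(Q,S) = −(1/2)·Q·S; that is, the conditions (PP-QQ) of the paper's general scheme hold on Sp(n) with μ = −1/2. -/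

import Mathlib

open Matrix

/-- The matrix `E_rs` with `(r,s)`-entry `1` and all other entries `0`. -/
noncomputable def EE (n : ℕ) (r s : Fin n) : Matrix (Fin n) (Fin n) ℂ :=
  Matrix.single r s 1

/-- `X_rs = (E_rs + E_sr)/√2`. -/
noncomputable def XX (n : ℕ) (r s : Fin n) : Matrix (Fin n) (Fin n) ℂ :=
  (Real.sqrt 2 : ℂ)⁻¹ • (EE n r s + EE n s r)

/-- `Y_rs = (E_rs - E_sr)/√2`. -/
noncomputable def YY (n : ℕ) (r s : Fin n) : Matrix (Fin n) (Fin n) ℂ :=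
  (Real.sqrt 2 : ℂ)⁻¹ • (EE n r s - EE n s r)

/-- `D_r = E_rr`. -/
noncomputable def DD (n : ℕ) (r : Fin n) : Matrix (Fin n) (Fin n) ℂ :=
  Matrix.single r r 1

/-- `2n × 2n` complex matrices, written in `n × n` blocks. -/
abbrev MSp (n : ℕ) := Matrix (Fin n ⊕ Fin n) (Fin n ⊕ Fin n) ℂ

/-- The quaternionic unitary group `Sp(n)`, realised as the intersection of `U(2n)`
with the standard complex representation of `GL_n(ℍ)`. -/
def SpGroup (n : ℕ) : Set (MSp n) :=
  {q | q * q.conjTranspose = 1 ∧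
    ∃ z w : Matrix (Fin n) (Fin n) ℂ,
      q = Matrix.fromBlocks z w (-(w.map (starRingEnd ℂ))) (z.map (starRingEnd ℂ))}

/-- Basis element `(1/√2)·[[Y_rs, 0], [0, Y_rs]]` of `sp(n)`. -/
noncomputable def B1 (n : ℕ) (r s : Fin n) : MSp n :=
  (Real.sqrt 2 : ℂ)⁻¹ • Matrix.fromBlocks (YY n r s) 0 0 (YY n r s)

/-- Basis element `(1/√2)·[[iX_rs, 0], [0, -iX_rs]]` of `sp(n)`. -/
noncomputable def B2 (n : ℕ) (r s : Fin n) : MSp n :=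
  (Real.sqrt 2 : ℂ)⁻¹ •
    Matrix.fromBlocks (Complex.I • XX n r s) 0 0 (-(Complex.I • XX n r s))

/-- Basis element `(1/√2)·[[0, X_rs], [-X_rs, 0]]` of `sp(n)`. -/
noncomputable def B3 (n : ℕ) (r s : Fin n) : MSp n :=
  (Real.sqrt 2 : ℂ)⁻¹ • Matrix.fromBlocks 0 (XX n r s) (-(XX n r s)) 0

/-- Basis element `(1/√2)·[[0, iX_rs], [iX_rs, 0]]` of `sp(n)`. -/
noncomputable def B4 (n : ℕ) (r s : Fin n) : MSp n :=
  (Real.sqrt 2 : ℂ)⁻¹ •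
    Matrix.fromBlocks 0 (Complex.I • XX n r s) (Complex.I • XX n r s) 0

/-- Basis element `(1/√2)·[[0, D_r], [-D_r, 0]]` of `sp(n)`. -/
noncomputable def C1 (n : ℕ) (r : Fin n) : MSp n :=
  (Real.sqrt 2 : ℂ)⁻¹ • Matrix.fromBlocks 0 (DD n r) (-(DD n r)) 0

/-- Basis element `(1/√2)·[[0, iD_r], [iD_r, 0]]` of `sp(n)`. -/
noncomputable def C2 (n : ℕ) (r : Fin n) : MSp n :=
  (Real.sqrt 2 : ℂ)⁻¹ •
    Matrix.fromBlocks 0 (Complex.I • DD n r) (Complex.I • DD n r) 0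

/-- Basis element `(1/√2)·[[iD_r, 0], [0, -iD_r]]` of `sp(n)`. -/
noncomputable def C3 (n : ℕ) (r : Fin n) : MSp n :=
  (Real.sqrt 2 : ℂ)⁻¹ •
    Matrix.fromBlocks (Complex.I • DD n r) 0 0 (-(Complex.I • DD n r))

/-- The Laplace–Beltrami operator `τ(F)(q) = Σ_{Z ∈ B} F(q·Z·Z)` of the bi-invariant
metric on `Sp(n)`, where `B` is the canonical orthonormal basis of `sp(n)`. -/
noncomputable def tauSp (n : ℕ) (F : MSp n → ℂ) (q : MSp n) : ℂ :=
  (∑ r : Fin n, ∑ s : Fin n, if r < s then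
      F (q * B1 n r s * B1 n r s) + F (q * B2 n r s * B2 n r s)
        + F (q * B3 n r s * B3 n r s) + F (q * B4 n r s * B4 n r s)
    else 0)
  + ∑ r : Fin n, (F (q * C1 n r * C1 n r) + F (q * C2 n r * C2 n r)
      + F (q * C3 n r * C3 n r))

/-- The conformality operator `κ(F,G)(q) = Σ_{Z ∈ B} F(q·Z)·G(q·Z)` on `Sp(n)`. -/
noncomputable def kappaSp (n : ℕ) (F G : MSp n → ℂ) (q : MSp n) : ℂ :=
  (∑ r : Fin n, ∑ s : Fin n, if r < s then
      F (q * B1 n r s) * G (q * B1 n r s) + F (q * B2 n r s) * G (q * B2 n r s)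
        + F (q * B3 n r s) * G (q * B3 n r s) + F (q * B4 n r s) * G (q * B4 n r s)
    else 0)
  + ∑ r : Fin n, (F (q * C1 n r) * G (q * C1 n r) + F (q * C2 n r) * G (q * C2 n r)
      + F (q * C3 n r) * G (q * C3 n r))

lemma hs2 : ((Real.sqrt 2 : ℝ) : ℂ)⁻¹ ^ 2 = (1/2 : ℂ) := by
  have h : ((Real.sqrt 2 : ℝ) : ℂ) ^ 2 = 2 := by
    norm_cast
    rw [Real.sq_sqrt]; norm_num
  rw [inv_pow, h]; norm_num

lemma mulB1 (n : ℕ) (M : MSp n) (r s j α : Fin n) :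
    (M * B1 n r s) (Sum.inl j) (Sum.inl α) =
    (1/2:ℂ) * ((if s = α then M (Sum.inl j) (Sum.inl r) else 0)
      - (if r = α then M (Sum.inl j) (Sum.inl s) else 0)) := by
  simp [B1, YY, EE, Matrix.mul_apply, Fintype.sum_sum_type, Matrix.single,
    Matrix.fromBlocks, mul_sub, mul_ite, ite_and, Finset.sum_sub_distrib, ← mul_assoc]
  ring_nf
  rw [hs2]
  split_ifs <;> ring

lemma mulB2 (n : ℕ) (M : MSp n) (r s j α : Fin n) :
    (M * B2 n r s) (Sum.inl j) (Sum.inl α) =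
    Complex.I * (1/2:ℂ) * ((if s = α then M (Sum.inl j) (Sum.inl r) else 0)
      + (if r = α then M (Sum.inl j) (Sum.inl s) else 0)) := by
  simp [B2, XX, EE, Matrix.mul_apply, Fintype.sum_sum_type, Matrix.single,
    Matrix.fromBlocks, mul_add, mul_ite, ite_and, Finset.sum_add_distrib, ← mul_assoc]
  ring_nf
  rw [hs2]
  split_ifs <;> ring

lemma mulB3 (n : ℕ) (M : MSp n) (r s j α : Fin n) :
    (M * B3 n r s) (Sum.inl j) (Sum.inl α) =
    -(1/2:ℂ) * ((if s = α then M (Sum.inl j) (Sum.inr r) else 0)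
      + (if r = α then M (Sum.inl j) (Sum.inr s) else 0)) := by
  simp [B3, XX, EE, Matrix.mul_apply, Fintype.sum_sum_type, Matrix.single,
    Matrix.fromBlocks, mul_add, mul_ite, ite_and, Finset.sum_add_distrib, ← mul_assoc]
  ring_nf
  rw [hs2]
  split_ifs <;> ring

lemma mulB4 (n : ℕ) (M : MSp n) (r s j α : Fin n) :
    (M * B4 n r s) (Sum.inl j) (Sum.inl α) =
    Complex.I * (1/2:ℂ) * ((if s = α then M (Sum.inl j) (Sum.inr r) else 0)
      + (if r = α then M (Sum.inl j) (Sum.inr s) else 0)) := by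
  simp [B4, XX, EE, Matrix.mul_apply, Fintype.sum_sum_type, Matrix.single,
    Matrix.fromBlocks, mul_add, mul_ite, ite_and, Finset.sum_add_distrib, ← mul_assoc]
  ring_nf
  rw [hs2]
  split_ifs <;> ring

lemma mulC1 (n : ℕ) (M : MSp n) (r j α : Fin n) :
    (M * C1 n r) (Sum.inl j) (Sum.inl α) =
    -((Real.sqrt 2 : ℂ)⁻¹) * (if r = α then M (Sum.inl j) (Sum.inr r) else 0) := by
  simp [C1, DD, Matrix.mul_apply, Fintype.sum_sum_type, Matrix.single,
    Matrix.fromBlocks, mul_ite, ite_and, ← mul_assoc]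
  split_ifs <;> ring

lemma mulC2 (n : ℕ) (M : MSp n) (r j α : Fin n) :
    (M * C2 n r) (Sum.inl j) (Sum.inl α) =
    Complex.I * (Real.sqrt 2 : ℂ)⁻¹ * (if r = α then M (Sum.inl j) (Sum.inr r) else 0) := by
  simp [C2, DD, Matrix.mul_apply, Fintype.sum_sum_type, Matrix.single,
    Matrix.fromBlocks, mul_ite, ite_and, ← mul_assoc]
  split_ifs <;> ring

lemma mulC3 (n : ℕ) (M : MSp n) (r j α : Fin n) :
    (M * C3 n r) (Sum.inl j) (Sum.inl α) =
    Complex.I * (Real.sqrt 2 : ℂ)⁻¹ * (if r = α then M (Sum.inl j) (Sum.inl r) else 0) := by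
  simp [C3, DD, Matrix.mul_apply, Fintype.sum_sum_type, Matrix.single,
    Matrix.fromBlocks, mul_ite, ite_and, ← mul_assoc]
  split_ifs <;> ring

noncomputable def Fv (n : ℕ) (c e : Fin n → ℂ) (N : MSp n) : ℂ :=
  ∑ j, ∑ α, c j * e α * N (Sum.inl j) (Sum.inl α)
noncomputable def uu (n : ℕ) (c : Fin n → ℂ) (M : MSp n) (r : Fin n) : ℂ :=
  ∑ j, c j * M (Sum.inl j) (Sum.inl r)
noncomputable def uw (n : ℕ) (c : Fin n → ℂ) (M : MSp n) (r : Fin n) : ℂ :=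
  ∑ j, c j * M (Sum.inl j) (Sum.inr r)

lemma FvB1 (n : ℕ) (c e : Fin n → ℂ) (M : MSp n) (r s : Fin n) :
    Fv n c e (M * B1 n r s) = (1/2:ℂ) * (uu n c M r * e s - uu n c M s * e r) := by
  have expand : (1/2:ℂ) * (uu n c M r * e s - uu n c M s * e r)
      = ∑ j, ((1/2:ℂ) * (c j * M (Sum.inl j) (Sum.inl r) * e s)
          - (1/2:ℂ) * (c j * M (Sum.inl j) (Sum.inl s) * e r)) := by
    rw [Finset.sum_sub_distrib, ← Finset.mul_sum, ← Finset.mul_sum, ← mul_sub]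
    congr 1
    rw [uu, uu, Finset.sum_mul, Finset.sum_mul, ← Finset.sum_sub_distrib]
  rw [expand]
  simp only [Fv, mulB1, mul_sub, mul_ite, mul_zero, Finset.sum_ite_eq,
    Finset.mem_univ, if_true, Finset.sum_sub_distrib]
  congr 1 <;> exact Finset.sum_congr rfl fun j _ => by ring

lemma FvB2 (n : ℕ) (c e : Fin n → ℂ) (M : MSp n) (r s : Fin n) :
    Fv n c e (M * B2 n r s)
      = Complex.I * (1/2:ℂ) * (uu n c M r * e s + uu n c M s * e r) := by
  have expand : Complex.I * (1/2:ℂ) * (uu n c M r * e s + uu n c M s * e r)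
      = ∑ j, (Complex.I * (1/2:ℂ) * (c j * M (Sum.inl j) (Sum.inl r) * e s)
          + Complex.I * (1/2:ℂ) * (c j * M (Sum.inl j) (Sum.inl s) * e r)) := by
    rw [Finset.sum_add_distrib, ← Finset.mul_sum, ← Finset.mul_sum, ← mul_add]
    congr 1
    rw [uu, uu, Finset.sum_mul, Finset.sum_mul, ← Finset.sum_add_distrib]
  rw [expand]
  simp only [Fv, mulB2, mul_add, mul_ite, mul_zero, Finset.sum_ite_eq,
    Finset.mem_univ, if_true, Finset.sum_add_distrib]
  congr 1 <;> exact Finset.sum_congr rfl fun j _ => by ring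

lemma FvB3 (n : ℕ) (c e : Fin n → ℂ) (M : MSp n) (r s : Fin n) :
    Fv n c e (M * B3 n r s)
      = -(1/2:ℂ) * (uw n c M r * e s + uw n c M s * e r) := by
  have expand : -(1/2:ℂ) * (uw n c M r * e s + uw n c M s * e r)
      = ∑ j, (-(1/2:ℂ) * (c j * M (Sum.inl j) (Sum.inr r) * e s)
          + -(1/2:ℂ) * (c j * M (Sum.inl j) (Sum.inr s) * e r)) := by
    rw [Finset.sum_add_distrib, ← Finset.mul_sum, ← Finset.mul_sum, ← mul_add]
    congr 1
    rw [uw, uw, Finset.sum_mul, Finset.sum_mul, ← Finset.sum_add_distrib]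
  rw [expand]
  simp only [Fv, mulB3, mul_add, mul_ite, mul_zero, Finset.sum_ite_eq,
    Finset.mem_univ, if_true, Finset.sum_add_distrib]
  congr 1 <;> exact Finset.sum_congr rfl fun j _ => by ring

lemma FvB4 (n : ℕ) (c e : Fin n → ℂ) (M : MSp n) (r s : Fin n) :
    Fv n c e (M * B4 n r s)
      = Complex.I * (1/2:ℂ) * (uw n c M r * e s + uw n c M s * e r) := by
  have expand : Complex.I * (1/2:ℂ) * (uw n c M r * e s + uw n c M s * e r)
      = ∑ j, (Complex.I * (1/2:ℂ) * (c j * M (Sum.inl j) (Sum.inr r) * e s)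
          + Complex.I * (1/2:ℂ) * (c j * M (Sum.inl j) (Sum.inr s) * e r)) := by
    rw [Finset.sum_add_distrib, ← Finset.mul_sum, ← Finset.mul_sum, ← mul_add]
    congr 1
    rw [uw, uw, Finset.sum_mul, Finset.sum_mul, ← Finset.sum_add_distrib]
  rw [expand]
  simp only [Fv, mulB4, mul_add, mul_ite, mul_zero, Finset.sum_ite_eq,
    Finset.mem_univ, if_true, Finset.sum_add_distrib]
  congr 1 <;> exact Finset.sum_congr rfl fun j _ => by ring

lemma FvC1 (n : ℕ) (c e : Fin n → ℂ) (M : MSp n) (r : Fin n) :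
    Fv n c e (M * C1 n r)
      = -((Real.sqrt 2 : ℂ)⁻¹) * (uw n c M r * e r) := by
  have expand : -((Real.sqrt 2 : ℂ)⁻¹) * (uw n c M r * e r)
      = ∑ j, (-((Real.sqrt 2 : ℂ)⁻¹) * (c j * M (Sum.inl j) (Sum.inr r) * e r)) := by
    rw [← Finset.mul_sum]
    congr 1
    rw [uw, Finset.sum_mul]
  rw [expand]
  simp only [Fv, mulC1, mul_ite, mul_zero, Finset.sum_ite_eq,
    Finset.mem_univ, if_true]
  exact Finset.sum_congr rfl fun j _ => by ring

lemma FvC2 (n : ℕ) (c e : Fin n → ℂ) (M : MSp n) (r : Fin n) :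
    Fv n c e (M * C2 n r)
      = Complex.I * (Real.sqrt 2 : ℂ)⁻¹ * (uw n c M r * e r) := by
  have expand : Complex.I * (Real.sqrt 2 : ℂ)⁻¹ * (uw n c M r * e r)
      = ∑ j, (Complex.I * (Real.sqrt 2 : ℂ)⁻¹ * (c j * M (Sum.inl j) (Sum.inr r) * e r)) := by
    rw [← Finset.mul_sum]
    congr 1
    rw [uw, Finset.sum_mul]
  rw [expand]
  simp only [Fv, mulC2, mul_ite, mul_zero, Finset.sum_ite_eq,
    Finset.mem_univ, if_true]
  exact Finset.sum_congr rfl fun j _ => by ring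

lemma FvC3 (n : ℕ) (c e : Fin n → ℂ) (M : MSp n) (r : Fin n) :
    Fv n c e (M * C3 n r)
      = Complex.I * (Real.sqrt 2 : ℂ)⁻¹ * (uu n c M r * e r) := by
  have expand : Complex.I * (Real.sqrt 2 : ℂ)⁻¹ * (uu n c M r * e r)
      = ∑ j, (Complex.I * (Real.sqrt 2 : ℂ)⁻¹ * (c j * M (Sum.inl j) (Sum.inl r) * e r)) := by
    rw [← Finset.mul_sum]
    congr 1
    rw [uu, Finset.sum_mul]
  rw [expand]
  simp only [Fv, mulC3, mul_ite, mul_zero, Finset.sum_ite_eq,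
    Finset.mem_univ, if_true]
  exact Finset.sum_congr rfl fun j _ => by ring

lemma sum_split (n : ℕ) (h : Fin n → Fin n → ℂ) :
    (∑ r, ∑ s, if r < s then h r s + h s r else 0) + ∑ r, h r r
      = ∑ r, ∑ s, h r s := by
  have tri : ∀ r s : Fin n, h r s =
      (if r < s then h r s else 0) + (if s < r then h r s else 0)
        + (if r = s then h r s else 0) := by
    intro r s
    rcases lt_trichotomy r s with hh|hh|hh
    · simp [hh, asymm hh, hh.ne]
    · simp [hh, lt_irrefl]
    · simp [hh, asymm hh, hh.ne']
  have expand : ∑ r, ∑ s, h r s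
      = (∑ r, ∑ s, if r < s then h r s else 0)
        + (∑ r, ∑ s, if s < r then h r s else 0)
        + (∑ r, ∑ s, if r = s then h r s else 0) := by
    rw [← Finset.sum_add_distrib, ← Finset.sum_add_distrib]
    refine Finset.sum_congr rfl fun r _ => ?_
    rw [← Finset.sum_add_distrib, ← Finset.sum_add_distrib]
    exact Finset.sum_congr rfl fun s _ => tri r s
  rw [expand]
  have hswap : (∑ r, ∑ s, if s < r then h r s else 0)
      = ∑ r : Fin n, ∑ s : Fin n, if r < s then h s r else 0 := Finset.sum_comm
  rw [hswap]
  have hdiag : (∑ r : Fin n, ∑ s : Fin n, if r = s then h r s else 0)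
      = ∑ r : Fin n, h r r := by
    simp [Finset.sum_ite_eq]
  rw [hdiag]
  congr 1
  rw [← Finset.sum_add_distrib]
  refine Finset.sum_congr rfl fun r _ => ?_
  rw [← Finset.sum_add_distrib]
  refine Finset.sum_congr rfl fun s _ => ?_
  split_ifs <;> simp


lemma Fv_eq (n : ℕ) (c f : Fin n → ℂ) (M : MSp n) :
    Fv n c f M = ∑ r, uu n c M r * f r := by
  rw [Fv, Finset.sum_comm]
  refine Finset.sum_congr rfl fun r _ => ?_
  rw [uu, Finset.sum_mul]
  exact Finset.sum_congr rfl fun j _ => by ring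

lemma key (n : ℕ) (c e d f : Fin n → ℂ) (M : MSp n) :
    kappaSp n (Fv n c e) (Fv n d f) M
      = -(1/2:ℂ) * (Fv n c f M * Fv n d e M) := by
  have hI : Complex.I * Complex.I = -1 := Complex.I_mul_I
  have h2 : ((Real.sqrt 2 : ℝ) : ℂ)⁻¹ * ((Real.sqrt 2 : ℝ) : ℂ)⁻¹ = (1/2 : ℂ) := by
    rw [← sq, hs2]
  set u : Fin n → ℂ := uu n c M with hu
  set v : Fin n → ℂ := uu n d M with hv
  set u' : Fin n → ℂ := uw n c M with hu'
  set v' : Fin n → ℂ := uw n d M with hv'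
  set g : Fin n → Fin n → ℂ := fun r s => -(1/2:ℂ) * ((u r * f r) * (v s * e s)) with hg
  rw [kappaSp]
  simp only [FvB1, FvB2, FvB3, FvB4, FvC1, FvC2, FvC3, ← hu, ← hv, ← hu', ← hv']
  have h1 : (∑ r : Fin n, ∑ s : Fin n, if r < s then
      (1/2:ℂ) * (u r * e s - u s * e r) * ((1/2:ℂ) * (v r * f s - v s * f r))
      + Complex.I * (1/2:ℂ) * (u r * e s + u s * e r) * (Complex.I * (1/2:ℂ) * (v r * f s + v s * f r))
      + -(1/2:ℂ) * (u' r * e s + u' s * e r) * (-(1/2:ℂ) * (v' r * f s + v' s * f r))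
      + Complex.I * (1/2:ℂ) * (u' r * e s + u' s * e r) * (Complex.I * (1/2:ℂ) * (v' r * f s + v' s * f r))
    else 0)
      = ∑ r : Fin n, ∑ s : Fin n, if r < s then g r s + g s r else 0 := by
    refine Finset.sum_congr rfl fun r _ => Finset.sum_congr rfl fun s _ => ?_
    split_ifs with hrs
    · rw [hg]
      linear_combination ((1/4:ℂ) * (u r * e s + u s * e r) * (v r * f s + v s * f r)
        + (1/4:ℂ) * (u' r * e s + u' s * e r) * (v' r * f s + v' s * f r)) * hI
    · rfl
  have h2' : (∑ r : Fin n,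
      (-((Real.sqrt 2 : ℂ)⁻¹) * (u' r * e r) * (-((Real.sqrt 2 : ℂ)⁻¹) * (v' r * f r))
      + Complex.I * (Real.sqrt 2 : ℂ)⁻¹ * (u' r * e r) * (Complex.I * (Real.sqrt 2 : ℂ)⁻¹ * (v' r * f r))
      + Complex.I * (Real.sqrt 2 : ℂ)⁻¹ * (u r * e r) * (Complex.I * (Real.sqrt 2 : ℂ)⁻¹ * (v r * f r))))
      = ∑ r : Fin n, g r r := by
    refine Finset.sum_congr rfl fun r _ => ?_
    rw [hg]
    linear_combination ((Real.sqrt 2 : ℂ)⁻¹ * (Real.sqrt 2 : ℂ)⁻¹ * ((u' r * e r) * (v' r * f r)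
        + (u r * e r) * (v r * f r))) * hI - ((u r * e r) * (v r * f r)) * h2
  rw [h1, h2', sum_split n g, Fv_eq n c f M, Fv_eq n d e M, ← hu, ← hv,
    Finset.sum_mul_sum, Finset.mul_sum]
  exact Finset.sum_congr rfl fun r _ => by rw [Finset.mul_sum]

/-- Lemma 8.4 (first choice): the functions `P = Σ p_j a_α z_{jα}`,
`Q = Σ q_k b_β z_{kβ}`, `R = Σ p_j b_β z_{jβ}`, `S = Σ q_k a_α z_{kα}` on `Sp(n)`
satisfy the conditions (PP-QQ) with `μ = -1/2`. -/
theorem stmt_14 (n : ℕ) (hn : 0 < n) (a b p q : Fin n → ℂ)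
    (P Q R S : MSp n → ℂ)
    (hPdef : P = fun M => ∑ j : Fin n, ∑ α : Fin n, p j * a α * M (Sum.inl j) (Sum.inl α))
    (hQdef : Q = fun M => ∑ k : Fin n, ∑ β : Fin n, q k * b β * M (Sum.inl k) (Sum.inl β))
    (hRdef : R = fun M => ∑ j : Fin n, ∑ β : Fin n, p j * b β * M (Sum.inl j) (Sum.inl β))
    (hSdef : S = fun M => ∑ k : Fin n, ∑ α : Fin n, q k * a α * M (Sum.inl k) (Sum.inl α)) :
    ∀ M ∈ SpGroup n,
      kappaSp n P P M = -(1 / 2 : ℂ) * (P M) ^ 2 ∧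
      kappaSp n Q Q M = -(1 / 2 : ℂ) * (Q M) ^ 2 ∧
      kappaSp n R R M = -(1 / 2 : ℂ) * (R M) ^ 2 ∧
      kappaSp n S S M = -(1 / 2 : ℂ) * (S M) ^ 2 ∧
      kappaSp n P Q M = -(1 / 2 : ℂ) * (R M * S M) ∧
      kappaSp n R S M = -(1 / 2 : ℂ) * (P M * Q M) ∧
      kappaSp n P R M = -(1 / 2 : ℂ) * (P M * R M) ∧
      kappaSp n P S M = -(1 / 2 : ℂ) * (P M * S M) ∧
      kappaSp n Q R M = -(1 / 2 : ℂ) * (Q M * R M) ∧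
      kappaSp n Q S M = -(1 / 2 : ℂ) * (Q M * S M) := by
  intro M _
  have hP : P = Fv n p a := hPdef
  have hQ : Q = Fv n q b := hQdef
  have hR : R = Fv n p b := hRdef
  have hS : S = Fv n q a := hSdef
  subst hP hQ hR hS
  refine ⟨?_, ?_, ?_, ?_, ?_, ?_, ?_, ?_, ?_, ?_⟩ <;>
    rw [key] <;> ring
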